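/- Let G be the graph with vertex set A₁ ∪ A₂ ∪ S as above (A₁, A₂ cliques of size n, edges sʲa₁ʲ, sʲa₂ʲ), but with S additionally turned into a clique. Then G is P₇-free, S is a minimal separator with full components A₁ and A₂, and every set X ⊆ A₁ ∪ A₂ with S ⊆ N[X] satisfies |X| ≥ n. -/

import Mathlib

open SimpleGraph Set

variable {V : Type*}

/-- Open neighborhood of a set: vertices outside `A` with a neighbor in `A`. -/
def nbhdSet (G : SimpleGraph V) (A : Set V) : Set V :=
  {v | v ∉ A ∧ ∃ u ∈ A, G.Adj u v}

/-- Union of closed neighborhoods of vertices of `X`. -/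
def closedNbhd (G : SimpleGraph V) (X : Set V) : Set V :=
  X ∪ {v | ∃ u ∈ X, G.Adj u v}

/-- `A` is a connected component of `G - S`. -/
def IsCompOutside (G : SimpleGraph V) (S A : Set V) : Prop :=
  A.Nonempty ∧ Disjoint A S ∧ (G.induce A).Connected ∧
    ∀ u ∈ A, ∀ v, v ∉ A → v ∉ S → ¬ G.Adj u v

/-- `A` is a full component of `G - S`, i.e. `N(A) = S`. -/
def IsFullComp (G : SimpleGraph V) (S A : Set V) : Prop :=
  IsCompOutside G S A ∧ nbhdSet G A = S

/-- `S` is a minimal separator: it has at least two full components. -/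
def IsMinSep (G : SimpleGraph V) (S : Set V) : Prop :=
  ∃ A B : Set V, A ≠ B ∧ IsFullComp G S A ∧ IsFullComp G S B

/-- `f` is an induced copy of the path on `k` vertices in `G`. -/
def IsInducedPathMap (G : SimpleGraph V) {k : ℕ} (f : Fin k ↪ V) : Prop :=
  ∀ i j : Fin k, G.Adj (f i) (f j) ↔ ((i : ℕ) + 1 = (j : ℕ) ∨ (j : ℕ) + 1 = (i : ℕ))

/-- `G` is `P_t`-free: no induced path on `t` vertices. -/
def PFree (t : ℕ) (G : SimpleGraph V) : Prop :=
  ¬ ∃ f : Fin t ↪ V, IsInducedPathMap G f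

/-- `Ω` is a potential maximal clique. -/
def IsPMC (G : SimpleGraph V) (Ω : Set V) : Prop :=
  (∀ D : Set V, IsCompOutside G Ω D → nbhdSet G D ≠ Ω) ∧
  (∀ u ∈ Ω, ∀ v ∈ Ω, u ≠ v → ¬ G.Adj u v →
    ∃ D : Set V, IsCompOutside G Ω D ∧ u ∈ nbhdSet G D ∧ v ∈ nbhdSet G D)

/-- Vertex set: `A₁ ⊕ A₂ ⊕ S`, each a copy of `Fin n`. -/
abbrev ExV (n : ℕ) := Fin n ⊕ Fin n ⊕ Fin n

/-- Adjacency of the second example: `A₁`, `A₂` and `S` are cliques, and `sʲ` is adjacent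
exactly to `a₁ʲ` and `a₂ʲ` outside `S`. -/
def exAdj2 (n : ℕ) : ExV n → ExV n → Prop
  | Sum.inl i, Sum.inl j => i ≠ j
  | Sum.inr (Sum.inl i), Sum.inr (Sum.inl j) => i ≠ j
  | Sum.inr (Sum.inr i), Sum.inr (Sum.inr j) => i ≠ j
  | Sum.inl i, Sum.inr (Sum.inr j) => i = j
  | Sum.inr (Sum.inr i), Sum.inl j => i = j
  | Sum.inr (Sum.inl i), Sum.inr (Sum.inr j) => i = j
  | Sum.inr (Sum.inr i), Sum.inr (Sum.inl j) => i = j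
  | _, _ => False

def exGraph2 (n : ℕ) : SimpleGraph (ExV n) where
  Adj := exAdj2 n
  symm := ⟨by
    rintro (i | i | i) (j | j | j) h <;> simp only [exAdj2] at h ⊢ <;> omega⟩
  loopless := ⟨by
    rintro (i | i | i) h <;> simp only [exAdj2] at h <;> omega⟩

def ExA1 (n : ℕ) : Set (ExV n) := Set.range Sum.inl
def ExA2 (n : ℕ) : Set (ExV n) := Set.range (fun j => Sum.inr (Sum.inl j))
def ExS (n : ℕ) : Set (ExV n) := Set.range (fun j => Sum.inr (Sum.inr j))

section Helpers

private def exPart {n : ℕ} : ExV n → Fin 3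
  | Sum.inl _ => 0
  | Sum.inr (Sum.inl _) => 1
  | Sum.inr (Sum.inr _) => 2

private lemma exPart_adj {n : ℕ} (x y : ExV n) (hp : exPart x = exPart y) (hne : x ≠ y) :
    (exGraph2 n).Adj x y := by
  rcases x with a | a | a <;> rcases y with b | b | b <;>
    simp_all [exPart, exGraph2, exAdj2]

private lemma exPFree (n : ℕ) : PFree 7 (exGraph2 n) := by
  rintro ⟨f, hf⟩
  obtain ⟨a, b, hab, he⟩ := Fintype.exists_ne_map_eq_of_card_lt
    (fun i : Fin 4 => exPart (f ⟨2 * i.val, by omega⟩)) (by simp)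
  have hv : a.val ≠ b.val := Fin.val_ne_of_ne hab
  set i : Fin 7 := ⟨2 * a.val, by omega⟩ with hi
  set k : Fin 7 := ⟨2 * b.val, by omega⟩ with hk
  have hik : i ≠ k := by
    simp only [hi, hk, ne_eq, Fin.mk.injEq]
    omega
  have hne : f i ≠ f k := fun h => hik (f.injective h)
  have hadj := exPart_adj _ _ he hne
  have h2 := (hf i k).mp hadj
  simp only [hi, hk] at h2
  omega

private lemma exFullA1 (n : ℕ) (hn : 1 ≤ n) :
    IsFullComp (exGraph2 n) (ExS n) (ExA1 n) := by
  constructor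
  · refine ⟨⟨Sum.inl ⟨0, hn⟩, ⟨_, rfl⟩⟩, ?_, ?_, ?_⟩
    · rw [Set.disjoint_left]
      rintro _ ⟨i, rfl⟩ ⟨j, h⟩
      simp at h
    · rw [SimpleGraph.connected_iff]
      refine ⟨?_, ⟨⟨Sum.inl ⟨0, hn⟩, ⟨_, rfl⟩⟩⟩⟩
      rintro ⟨x, i, rfl⟩ ⟨y, j, rfl⟩
      by_cases hij : i = j
      · subst hij; rfl
      · exact SimpleGraph.Adj.reachable (by exact hij)
    · rintro u ⟨i, rfl⟩ v hvA hvS hadj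
      rcases v with j | j | j
      · exact hvA ⟨j, rfl⟩
      · exact hadj
      · exact hvS ⟨j, rfl⟩
  · ext v
    constructor
    · rintro ⟨hv, u, ⟨i, rfl⟩, hadj⟩
      rcases v with j | j | j
      · exact absurd ⟨j, rfl⟩ hv
      · exact absurd hadj (by simp [exGraph2, exAdj2])
      · exact ⟨j, rfl⟩
    · rintro ⟨j, rfl⟩
      refine ⟨?_, Sum.inl j, ⟨j, rfl⟩, ?_⟩
      · rintro ⟨i, h⟩; simp at h
      · exact rfl

private lemma exFullA2 (n : ℕ) (hn : 1 ≤ n) :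
    IsFullComp (exGraph2 n) (ExS n) (ExA2 n) := by
  constructor
  · refine ⟨⟨Sum.inr (Sum.inl ⟨0, hn⟩), ⟨_, rfl⟩⟩, ?_, ?_, ?_⟩
    · rw [Set.disjoint_left]
      rintro _ ⟨i, rfl⟩ ⟨j, h⟩
      simp at h
    · rw [SimpleGraph.connected_iff]
      refine ⟨?_, ⟨⟨Sum.inr (Sum.inl ⟨0, hn⟩), ⟨_, rfl⟩⟩⟩⟩
      rintro ⟨x, i, rfl⟩ ⟨y, j, rfl⟩
      by_cases hij : i = j
      · subst hij; rfl
      · exact SimpleGraph.Adj.reachable (by exact hij)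
    · rintro u ⟨i, rfl⟩ v hvA hvS hadj
      rcases v with j | j | j
      · exact hadj
      · exact hvA ⟨j, rfl⟩
      · exact hvS ⟨j, rfl⟩
  · ext v
    constructor
    · rintro ⟨hv, u, ⟨i, rfl⟩, hadj⟩
      rcases v with j | j | j
      · exact absurd hadj (by simp [exGraph2, exAdj2])
      · exact absurd ⟨j, rfl⟩ hv
      · exact ⟨j, rfl⟩
    · rintro ⟨j, rfl⟩
      refine ⟨?_, Sum.inr (Sum.inl j), ⟨j, rfl⟩, ?_⟩
      · rintro ⟨i, h⟩; simp at h
      · exact rfl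

end Helpers

/-- The second example is `P₇`-free, `S` is a minimal separator with full components
`A₁` and `A₂`, and every dominating set of `S` contained in `A₁ ∪ A₂` has size at least `n`. -/
theorem stmt_7 (n : ℕ) (hn : 1 ≤ n) :
    PFree 7 (exGraph2 n) ∧
      IsMinSep (exGraph2 n) (ExS n) ∧
      IsFullComp (exGraph2 n) (ExS n) (ExA1 n) ∧
      IsFullComp (exGraph2 n) (ExS n) (ExA2 n) ∧
      ∀ X : Finset (ExV n), ↑X ⊆ ExA1 n ∪ ExA2 n →
        ExS n ⊆ closedNbhd (exGraph2 n) ↑X → n ≤ X.card := by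
  have hA1 := exFullA1 n hn
  have hA2 := exFullA2 n hn
  have hne : ExA1 n ≠ ExA2 n := by
    intro h
    have h0 : (Sum.inl ⟨0, hn⟩ : ExV n) ∈ ExA2 n := h ▸ ⟨⟨0, hn⟩, rfl⟩
    obtain ⟨j, hj⟩ := h0
    simp at hj
  refine ⟨exPFree n, ⟨ExA1 n, ExA2 n, hne, hA1, hA2⟩, hA1, hA2, ?_⟩
  intro X hX hS
  have hmap : ∀ j : Fin n, ∃ u, u ∈ X ∧ (u = Sum.inl j ∨ u = Sum.inr (Sum.inl j)) := by
    intro j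
    have hsj : (Sum.inr (Sum.inr j) : ExV n) ∈ closedNbhd (exGraph2 n) ↑X := hS ⟨j, rfl⟩
    rcases hsj with h | ⟨u, hu, hadj⟩
    · rcases hX h with ⟨i, hi⟩ | ⟨i, hi⟩ <;> simp at hi
    · rcases u with i | i | i
      · have : i = j := hadj
        exact ⟨Sum.inl i, hu, Or.inl (by rw [this])⟩
      · have : i = j := hadj
        exact ⟨Sum.inr (Sum.inl i), hu, Or.inr (by rw [this])⟩
      · rcases hX hu with ⟨m, hm⟩ | ⟨m, hm⟩ <;> simp at hm
  choose h hX' hform using hmap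
  have hinj : Set.InjOn h ↑(Finset.univ : Finset (Fin n)) := by
    intro j _ j' _ hjj'
    rcases hform j with h1 | h1 <;> rcases hform j' with h2 | h2 <;>
      rw [h1, h2] at hjj' <;> simp_all
  calc n = (Finset.univ : Finset (Fin n)).card := by simp
    _ ≤ X.card := Finset.card_le_card_of_injOn h (fun j _ => hX' j) hinj
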